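/- arXiv:0802.3190 — 2 statements merged into one kernel-verified Lean document; each statement's English description precedes it below -/
import Mathlib

section
/- If x, y ∈ D_I^δ with ‖x_i - y_i‖ < α for all i and α < δ/(2|I|), then the Lebesgue measure of the set of ω ∈ [0,1]^d whose Voronoi index differs between x and y (i.e., C_x^{-1}(ω) ≠ C_y^{-1}(ω)) is at most |I|·(|I|-1)·(4α/δ + α)·(√2)^{d-1}. -/
open MeasureTheory Finset

noncomputable section

abbrev Eu (d : ℕ) := EuclideanSpace ℝ (Fin d)

def cube (d : ℕ) : Set (Eu d) := {ω | ∀ i, ω i ∈ Set.Icc (0:ℝ) 1}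

def vIndex {d : ℕ} {ι : Type*} [Fintype ι] [LinearOrder ι] [Nonempty ι]
    (x : ι → Eu d) (ω : Eu d) : ι :=
  (Finset.univ.filter fun i => ∀ j, dist (x i) ω ≤ dist (x j) ω).min' (by
    obtain ⟨i, -, hi⟩ := Finset.exists_min_image Finset.univ
      (fun j => dist (x j) ω) ⟨Classical.arbitrary ι, Finset.mem_univ _⟩
    exact ⟨i, Finset.mem_filter.2 ⟨Finset.mem_univ _,
      fun j => hi j (Finset.mem_univ _)⟩⟩)

def vCell {d : ℕ} {ι : Type*} [Fintype ι] [LinearOrder ι] [Nonempty ι]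
    (x : ι → Eu d) (i : ι) : Set (Eu d) :=
  {ω ∈ cube d | vIndex x ω = i}

def sep {d : ℕ} {ι : Type*} (δ : ℝ) : Set (ι → Eu d) :=
  {x | (∀ i, x i ∈ cube d) ∧ ∀ i j, i ≠ j → δ ≤ dist (x i) (x j)}

def gfun {d : ℕ} {ι : Type*} [Fintype ι] [LinearOrder ι] [Nonempty ι]
    (Λ : ι → ι → ℝ) (x : ι → Eu d) (ω : Eu d) : ℝ :=
  ∑ j, Λ (vIndex x ω) j * ‖x j - ω‖ ^ 2

def extVar {d : ℕ} {ι : Type*} [Fintype ι] [LinearOrder ι] [Nonempty ι]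
    (Λ : ι → ι → ℝ) (P : Measure (Eu d)) (x : ι → Eu d) : ℝ :=
  (1/2) * ∑ i, ∑ j, Λ i j * ∫ ω in vCell x i, ‖x j - ω‖ ^ 2 ∂P

/-! ### Auxiliary lemmas -/

lemma vol_mul_icc (v p q : ℝ) (hv : v ≠ 0) :
    volume {t : ℝ | t * v ∈ Set.Icc p q} ≤ ENNReal.ofReal ((q - p) / |v|) := by
  rcases lt_or_gt_of_ne hv with hneg | hpos
  · have : {t : ℝ | t * v ∈ Set.Icc p q} = Set.Icc (q / v) (p / v) := by
      ext t
      simp only [Set.mem_setOf_eq, Set.mem_Icc]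
      constructor
      · rintro ⟨h1, h2⟩
        exact ⟨(div_le_iff_of_neg hneg).2 h2, (le_div_iff_of_neg hneg).2 h1⟩
      · rintro ⟨h1, h2⟩
        exact ⟨(le_div_iff_of_neg hneg).1 h2, (div_le_iff_of_neg hneg).1 h1⟩
    rw [this, Real.volume_Icc]
    apply ENNReal.ofReal_le_ofReal
    rw [abs_of_neg hneg]
    rw [div_sub_div_same, div_neg, ← neg_div, neg_sub]
  · have : {t : ℝ | t * v ∈ Set.Icc p q} = Set.Icc (p / v) (q / v) := by
      ext t
      simp only [Set.mem_setOf_eq, Set.mem_Icc]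
      constructor
      · rintro ⟨h1, h2⟩
        exact ⟨(div_le_iff₀ hpos).2 (by linarith), (le_div_iff₀ hpos).2 (by linarith)⟩
      · rintro ⟨h1, h2⟩
        exact ⟨(div_le_iff₀ hpos).1 h1, (le_div_iff₀ hpos).1 h2⟩
    rw [this, Real.volume_Icc]
    apply ENNReal.ofReal_le_ofReal
    rw [abs_of_pos hpos, div_sub_div_same]

lemma cube_meas (n : ℕ) : MeasurableSet {y : Fin n → ℝ | ∀ i, y i ∈ Set.Icc (0:ℝ) 1} := by
  have : {y : Fin n → ℝ | ∀ i, y i ∈ Set.Icc (0:ℝ) 1}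
      = ⋂ m, (fun y : Fin n → ℝ => y m) ⁻¹' Set.Icc 0 1 := by ext; simp
  rw [this]
  exact MeasurableSet.iInter fun m => (measurable_pi_apply m) measurableSet_Icc

lemma cube_vol (n : ℕ) : volume {y : Fin n → ℝ | ∀ i, y i ∈ Set.Icc (0:ℝ) 1} = 1 := by
  have : {y : Fin n → ℝ | ∀ i, y i ∈ Set.Icc (0:ℝ) 1}
      = Set.univ.pi fun _ => Set.Icc (0:ℝ) 1 := by
    ext y; simp [Set.mem_pi, Pi.le_def, forall_and]
  rw [this, volume_pi_pi]
  simp [Real.volume_Icc]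

lemma slab_pi (n : ℕ) (k : Fin (n+1)) (v : Fin (n+1) → ℝ) (hk : v k ≠ 0) (a b : ℝ) :
    volume {ω : Fin (n+1) → ℝ | (∀ m, ω m ∈ Set.Icc (0:ℝ) 1) ∧
      (∑ m, ω m * v m) ∈ Set.Icc a b} ≤ ENNReal.ofReal ((b - a) / |v k|) := by
  set A : Set (Fin (n+1) → ℝ) := {ω | (∀ m, ω m ∈ Set.Icc (0:ℝ) 1) ∧
      (∑ m, ω m * v m) ∈ Set.Icc a b} with hA
  have hAmeas : MeasurableSet A := by
    apply MeasurableSet.inter (cube_meas (n+1))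
    exact (Finset.measurable_sum _ fun m _ =>
        (measurable_pi_apply m).mul_const _) measurableSet_Icc
  set e := MeasurableEquiv.piFinSuccAbove (fun _ : Fin (n+1) => ℝ) k with he
  have hmp := MeasureTheory.volume_preserving_piFinSuccAbove (fun _ : Fin (n+1) => ℝ) k
  set B : Set (ℝ × (Fin n → ℝ)) := e.symm ⁻¹' A with hB
  have hBmeas : MeasurableSet B := e.symm.measurable hAmeas
  have hvol : volume A = (volume.prod volume) B := by
    have h2 := hmp.measure_preimage (s := B) hBmeas.nullMeasurableSet
    rw [← Measure.volume_eq_prod, ← h2]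
    congr 1
    rw [hB, ← Set.preimage_comp, MeasurableEquiv.symm_comp_self, Set.preimage_id]
  rw [hvol, Measure.prod_apply_symm hBmeas]
  have hslice : ∀ y : Fin n → ℝ,
      volume ((fun t => (t, y)) ⁻¹' B) ≤
        Set.indicator {y : Fin n → ℝ | ∀ i, y i ∈ Set.Icc (0:ℝ) 1}
          (fun _ => ENNReal.ofReal ((b - a) / |v k|)) y := by
    intro y
    by_cases hy : ∀ i, y i ∈ Set.Icc (0:ℝ) 1
    · rw [Set.indicator_of_mem (show y ∈ {y : Fin n → ℝ | ∀ i, y i ∈ Set.Icc (0:ℝ) 1} from hy)]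
      refine le_trans (le_trans (measure_mono ?_) (vol_mul_icc (v k)
        (a - ∑ i, y i * v (k.succAbove i)) (b - ∑ i, y i * v (k.succAbove i)) hk)) (le_of_eq ?_)
      · intro t ht
        simp only [Set.mem_preimage, hB, hA, Set.mem_setOf_eq] at ht
        obtain ⟨-, hsum⟩ := ht
        have hs : ∑ m, (e.symm (t, y)) m * v m
            = t * v k + ∑ i, y i * v (k.succAbove i) := by
          rw [Fin.sum_univ_succAbove (fun m => (e.symm (t, y)) m * v m) k]
          simp [e, MeasurableEquiv.piFinSuccAbove, Fin.insertNthEquiv]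
        rw [hs] at hsum
        simp only [Set.mem_setOf_eq, Set.mem_Icc]
        constructor <;> [linarith [hsum.1]; linarith [hsum.2]]
      · congr 1
        ring
    · rw [Set.indicator_of_notMem
        (show y ∉ {y : Fin n → ℝ | ∀ i, y i ∈ Set.Icc (0:ℝ) 1} from hy)]
      have hemp : ((fun t => (t, y)) ⁻¹' B) = ∅ := by
        ext t
        simp only [Set.mem_preimage, hB, hA, Set.mem_setOf_eq, Set.mem_empty_iff_false,
          iff_false]
        rintro ⟨hcube, -⟩
        apply hy
        intro i
        have := hcube (k.succAbove i)
        simpa [e, MeasurableEquiv.piFinSuccAbove, Fin.insertNthEquiv] using this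
      rw [hemp, measure_empty]
  calc ∫⁻ y, volume ((fun t => (t, y)) ⁻¹' B) ∂volume
      ≤ ∫⁻ y, Set.indicator {y : Fin n → ℝ | ∀ i, y i ∈ Set.Icc (0:ℝ) 1}
          (fun _ => ENNReal.ofReal ((b - a) / |v k|)) y ∂volume :=
        lintegral_mono hslice
    _ ≤ ENNReal.ofReal ((b - a) / |v k|) := by
        rw [lintegral_indicator (cube_meas n), setLIntegral_const, cube_vol n, mul_one]

lemma normsq_eu {d : ℕ} (v : Eu d) : ‖v‖^2 = ∑ m, (v m)^2 := by
  rw [EuclideanSpace.norm_eq, Real.sq_sqrt (by positivity)]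
  simp [sq_abs]

lemma slab_eu (n : ℕ) (u : Eu (n+1)) (δ : ℝ) (hδ : 0 < δ) (hu : δ ≤ ‖u‖)
    (a b : ℝ) (hab : a ≤ b) :
    volume {ω : Eu (n+1) | ω ∈ cube (n+1) ∧ (∑ m, ω m * u m) ∈ Set.Icc a b}
      ≤ ENNReal.ofReal ((b - a) * Real.sqrt (n+1) / δ) := by
  obtain ⟨k, -, hk⟩ := Finset.exists_max_image Finset.univ (fun m => |u m|)
    ⟨0, Finset.mem_univ _⟩
  have huk : |u k| ≠ 0 := by
    intro h0
    have : ‖u‖ = 0 := by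
      have : ∀ m, u m = 0 := fun m => abs_eq_zero.1
        (le_antisymm (h0 ▸ hk m (Finset.mem_univ m)) (abs_nonneg _))
      rw [EuclideanSpace.norm_eq]
      simp [this]
    linarith
  have hukpos : 0 < |u k| := lt_of_le_of_ne (abs_nonneg _) (Ne.symm huk)
  have hnorm : ‖u‖ ≤ Real.sqrt (n+1) * |u k| := by
    rw [EuclideanSpace.norm_eq, ← Real.sqrt_sq (abs_nonneg (u k)), ← Real.sqrt_mul
      (by positivity)]
    apply Real.sqrt_le_sqrt
    calc ∑ i, ‖u i‖^2 ≤ ∑ _i : Fin (n+1), |u k|^2 := by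
          apply Finset.sum_le_sum
          intro i _
          rw [Real.norm_eq_abs]
          exact pow_le_pow_left₀ (abs_nonneg _) (hk i (Finset.mem_univ i)) 2
      _ = (n+1) * |u k|^2 := by simp [Finset.sum_const]; try ring
  set e1 := (MeasurableEquiv.toLp 2 (Fin (n+1) → ℝ)).symm with he1
  have hset : {ω : Eu (n+1) | ω ∈ cube (n+1) ∧ (∑ m, ω m * u m) ∈ Set.Icc a b}
      = e1 ⁻¹' {ω : Fin (n+1) → ℝ | (∀ m, ω m ∈ Set.Icc (0:ℝ) 1) ∧
        (∑ m, ω m * (fun m => u m) m) ∈ Set.Icc a b} := rfl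
  have hApi : MeasurableSet {ω : Fin (n+1) → ℝ | (∀ m, ω m ∈ Set.Icc (0:ℝ) 1) ∧
      (∑ m, ω m * (fun m => u m) m) ∈ Set.Icc a b} := by
    apply MeasurableSet.inter
    · show MeasurableSet {y : Fin (n+1) → ℝ | ∀ i, y i ∈ Set.Icc (0:ℝ) 1}
      exact cube_meas (n+1)
    · exact (Finset.measurable_sum _ fun m _ =>
        (measurable_pi_apply m).mul_const _) measurableSet_Icc
  rw [hset, (EuclideanSpace.volume_preserving_symm_measurableEquiv_toLp
    (Fin (n+1))).measure_preimage hApi.nullMeasurableSet]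
  refine le_trans (slab_pi n k (fun m => u m) (abs_ne_zero.mp huk) a b)
    (ENNReal.ofReal_le_ofReal ?_)
  rw [div_le_div_iff₀ hukpos hδ]
  calc (b - a) * δ ≤ (b - a) * (Real.sqrt (n+1) * |u k|) :=
        mul_le_mul_of_nonneg_left (le_trans hu hnorm) (by linarith)
    _ = (b - a) * Real.sqrt (n+1) * |u k| := by ring

lemma two_sqrt_pow (n : ℕ) : (n + 1 : ℝ) ≤ 2 * Real.sqrt 2 ^ n := by
  have hs2 : (1:ℝ) ≤ Real.sqrt 2 := by
    rw [show (1:ℝ) = Real.sqrt 1 by simp]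
    exact Real.sqrt_le_sqrt (by norm_num)
  rcases Nat.even_or_odd n with ⟨m, rfl⟩ | ⟨m, rfl⟩
  · have h2 : Real.sqrt 2 ^ (m + m) = 2 ^ m := by
      rw [← two_mul, pow_mul, Real.sq_sqrt (by norm_num)]
    rw [h2]
    have hm : (m:ℝ) + 1 ≤ 2^m := by exact_mod_cast (Nat.lt_two_pow_self (n := m))
    push_cast
    nlinarith
  · have h2 : Real.sqrt 2 ^ (2*m + 1) = 2 ^ m * Real.sqrt 2 := by
      rw [pow_succ, pow_mul, Real.sq_sqrt (by norm_num)]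
    rw [h2]
    have hm : (m:ℝ) + 1 ≤ 2^m := by exact_mod_cast (Nat.lt_two_pow_self (n := m))
    push_cast
    nlinarith

lemma vIndex_min {d : ℕ} {ι : Type*} [Fintype ι] [LinearOrder ι] [Nonempty ι]
    (x : ι → Eu d) (ω : Eu d) (j : ι) :
    dist (x (vIndex x ω)) ω ≤ dist (x j) ω := by
  have h := Finset.min'_mem
    (Finset.univ.filter fun i => ∀ j, dist (x i) ω ≤ dist (x j) ω)
    (by
      obtain ⟨i, -, hi⟩ := Finset.exists_min_image Finset.univ
        (fun j => dist (x j) ω) ⟨Classical.arbitrary ι, Finset.mem_univ _⟩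
      exact ⟨i, Finset.mem_filter.2 ⟨Finset.mem_univ _,
        fun j => hi j (Finset.mem_univ _)⟩⟩)
  exact (Finset.mem_filter.1 h).2 j

lemma min'_congr' {α : Type*} [LinearOrder α] {s t : Finset α} (h : s = t)
    (hs : s.Nonempty) : s.min' hs = t.min' (h ▸ hs) := by subst h; rfl

lemma vIndex_d0 {ι : Type*} [Fintype ι] [LinearOrder ι] [Nonempty ι]
    (x y : ι → Eu 0) (ω : Eu 0) : vIndex x ω = vIndex y ω := by
  have hz : ∀ (z : ι → Eu 0) (i : ι), dist (z i) ω = 0 := by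
    intro z i
    rw [dist_eq_norm]
    have := normsq_eu (z i - ω)
    simp only [Finset.univ_eq_empty, Finset.sum_empty] at this
    exact pow_eq_zero_iff (n := 2) (by norm_num) |>.1 this
  have hfix : ∀ z : ι → Eu 0,
      (Finset.univ.filter fun i => ∀ j, dist (z i) ω ≤ dist (z j) ω) = Finset.univ := by
    intro z
    apply Finset.filter_true_of_mem
    intro i _ j
    rw [hz z i, hz z j]
  unfold vIndex
  rw [min'_congr' (hfix x), min'_congr' (hfix y)]

lemma dist_cube {d : ℕ} {p q : Eu d} (hp : p ∈ cube d) (hq : q ∈ cube d) :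
    dist p q ≤ Real.sqrt d := by
  rw [dist_eq_norm, ← Real.sqrt_sq (norm_nonneg (p - q))]
  apply Real.sqrt_le_sqrt
  rw [normsq_eu]
  calc ∑ m, ((p - q) m)^2 ≤ ∑ _m : Fin d, (1:ℝ) := by
        apply Finset.sum_le_sum
        intro m _
        have h1 := hp m
        have h2 := hq m
        simp only [Set.mem_Icc] at h1 h2
        have heq : (p - q) m = p m - q m := rfl
        rw [heq]
        nlinarith [h1.1, h1.2, h2.1, h2.2]
    _ = d := by simp

theorem stmt7 {d : ℕ} {ι : Type*} [Fintype ι] [LinearOrder ι] [Nonempty ι]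
    (δ α : ℝ) (hδ : 0 < δ) (hα : 0 < α)
    (hαcard : α < δ / (2 * Fintype.card ι))
    (x y : ι → Eu d) (hx : x ∈ sep δ) (hy : y ∈ sep δ)
    (hclose : ∀ i, dist (x i) (y i) < α) :
    volume {ω ∈ cube d | vIndex x ω ≠ vIndex y ω}
      ≤ ENNReal.ofReal
          (Fintype.card ι * (Fintype.card ι - 1) * (4 * α / δ + α)
            * Real.sqrt 2 ^ (d - 1)) := by
  classical
  obtain ⟨hxcube, hxsep⟩ := hx
  obtain ⟨hycube, hysep⟩ := hy
  cases d with
  | zero =>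
    have hemp : {ω ∈ cube 0 | vIndex x ω ≠ vIndex y ω} = ∅ := by
      ext ω
      simp only [Set.mem_setOf_eq, Set.mem_empty_iff_false, iff_false, not_and]
      intro _
      simp [vIndex_d0 x y ω]
    rw [hemp, measure_empty]
    exact zero_le
  | succ n =>
    set N := Fintype.card ι with hN
    have hN1 : 1 ≤ N := Fintype.card_pos
    set w : ℝ := 2 * α * Real.sqrt (n+1) with hw
    have hsqrtpos : (0:ℝ) < Real.sqrt (n+1) := Real.sqrt_pos.2 (by positivity)
    have hwpos : 0 ≤ w := by positivity
    set S : ι × ι → Set (Eu (n+1)) := fun p =>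
      {ω : Eu (n+1) | ω ∈ cube (n+1) ∧
        (∑ m, ω m * (x p.1 - x p.2) m) ∈
          Set.Icc ((‖x p.1‖^2 - ‖x p.2‖^2)/2) ((‖x p.1‖^2 - ‖x p.2‖^2)/2 + w)} with hS
    -- inclusion
    have hsub : {ω ∈ cube (n+1) | vIndex x ω ≠ vIndex y ω}
        ⊆ ⋃ p ∈ (Finset.univ.offDiag : Finset (ι × ι)), S p := by
      intro ω hω
      obtain ⟨hcube, hne⟩ := hω
      set i := vIndex x ω with hi
      set j := vIndex y ω with hj
      have h1 : dist (x i) ω ≤ dist (x j) ω := vIndex_min x ω j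
      have h2 : dist (y j) ω ≤ dist (y i) ω := vIndex_min y ω i
      have h3 : dist (x j) ω ≤ dist (y j) ω + α := by
        have := dist_triangle (x j) (y j) ω
        have := hclose j
        linarith
      have h4 : dist (y i) ω ≤ dist (x i) ω + α := by
        have := dist_triangle (y i) (x i) ω
        have h5 := hclose i
        rw [dist_comm (y i) (x i)] at this
        linarith
      have hdj : dist (x j) ω ≤ dist (x i) ω + 2*α := by linarith
      have hdib : dist (x i) ω ≤ Real.sqrt (n+1) := by
        have := dist_cube (hxcube i) hcube
        rwa [show ((n+1 : ℕ):ℝ) = (n:ℝ)+1 by push_cast; ring] at this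
      have hdjb : dist (x j) ω ≤ Real.sqrt (n+1) := by
        have := dist_cube (hxcube j) hcube
        rwa [show ((n+1 : ℕ):ℝ) = (n:ℝ)+1 by push_cast; ring] at this
      have hdin : 0 ≤ dist (x i) ω := dist_nonneg
      -- identity
      have epoint : ∀ a : Eu (n+1), dist a ω ^ 2 = ∑ m, (a m - ω m)^2 := by
        intro a
        rw [dist_eq_norm, normsq_eu]
        exact Finset.sum_congr rfl fun m _ => by rw [show (a - ω) m = a m - ω m from rfl]
      have hid : dist (x j) ω ^ 2 - dist (x i) ω ^ 2
          = 2 * (∑ m, ω m * (x i m - x j m)) + (‖x j‖^2 - ‖x i‖^2) := by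
        rw [epoint (x j), epoint (x i), normsq_eu (x j), normsq_eu (x i)]
        calc (∑ m, (x j m - ω m)^2) - (∑ m, (x i m - ω m)^2)
            = ∑ m, ((x j m - ω m)^2 - (x i m - ω m)^2) := by
              rw [Finset.sum_sub_distrib]
          _ = ∑ m, (2*(ω m * (x i m - x j m)) + ((x j m)^2 - (x i m)^2)) :=
              Finset.sum_congr rfl fun m _ => by ring
          _ = 2 * (∑ m, ω m * (x i m - x j m)) + ((∑ m, (x j m)^2) - (∑ m, (x i m)^2)) := by
              rw [Finset.sum_add_distrib, ← Finset.mul_sum, Finset.sum_sub_distrib]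
      have hsq0 : 0 ≤ dist (x j) ω ^ 2 - dist (x i) ω ^ 2 := by nlinarith
      have hsqU : dist (x j) ω ^ 2 - dist (x i) ω ^ 2 ≤ 2 * w := by
        rw [hw]
        nlinarith
      rw [Set.mem_iUnion₂]
      refine ⟨(i, j), Finset.mem_coe.2 (Finset.mem_offDiag.2
        ⟨Finset.mem_univ _, Finset.mem_univ _, hne⟩), ?_⟩
      refine ⟨hcube, ?_⟩
      have hLrw : (∑ m, ω m * (x i - x j) m) = ∑ m, ω m * (x i m - x j m) :=
        Finset.sum_congr rfl fun m _ => by rw [show (x i - x j) m = x i m - x j m from rfl]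
      rw [hLrw]
      constructor
      · linarith [hid, hsq0]
      · linarith [hid, hsqU]
    -- measure bound
    have hpair : ∀ p ∈ (Finset.univ.offDiag : Finset (ι × ι)),
        volume (S p) ≤ ENNReal.ofReal (w * Real.sqrt (n+1) / δ) := by
      intro p hp
      have hpne : p.1 ≠ p.2 := (Finset.mem_offDiag.1 hp).2.2
      have hsep' : δ ≤ ‖x p.1 - x p.2‖ := by
        rw [← dist_eq_norm]
        exact hxsep p.1 p.2 hpne
      refine le_trans (slab_eu n (x p.1 - x p.2) δ hδ hsep' _ _ (by linarith)) ?_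
      apply ENNReal.ofReal_le_ofReal
      apply le_of_eq
      ring_nf
    calc volume {ω ∈ cube (n+1) | vIndex x ω ≠ vIndex y ω}
        ≤ volume (⋃ p ∈ (Finset.univ.offDiag : Finset (ι × ι)), S p) :=
          measure_mono hsub
      _ ≤ ∑ p ∈ (Finset.univ.offDiag : Finset (ι × ι)), volume (S p) :=
          measure_biUnion_finset_le _ _
      _ ≤ ∑ p ∈ (Finset.univ.offDiag : Finset (ι × ι)),
            ENNReal.ofReal (w * Real.sqrt (n+1) / δ) := Finset.sum_le_sum hpair
      _ = ((N * N - N : ℕ) : ENNReal) * ENNReal.ofReal (w * Real.sqrt (n+1) / δ) := by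
          rw [Finset.sum_const, Finset.offDiag_card, Finset.card_univ, nsmul_eq_mul, hN]
      _ ≤ ENNReal.ofReal (N * (N - 1) * (4 * α / δ + α) * Real.sqrt 2 ^ (n + 1 - 1)) := by
          rw [← ENNReal.ofReal_natCast, ← ENNReal.ofReal_mul (by positivity)]
          apply ENNReal.ofReal_le_ofReal
          have hcast : ((N * N - N : ℕ) : ℝ) = (N:ℝ) * ((N:ℝ) - 1) := by
            rw [Nat.cast_sub (Nat.le_mul_of_pos_left N (by omega))]
            push_cast
            ring
          rw [hcast]
          have hw2 : w * Real.sqrt (n+1) / δ = 2 * α * ((n:ℝ)+1) / δ := by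
            rw [hw, mul_assoc, Real.mul_self_sqrt (by positivity)]
          rw [hw2]
          simp only [Nat.add_sub_cancel]
          set s : ℝ := Real.sqrt 2 ^ n with hs
          have hs0 : 0 ≤ s := by positivity
          have hinner : 2 * α * ((n:ℝ)+1) / δ ≤ (4 * α / δ + α) * s := by
            have hp1 : 2 * α * ((n:ℝ)+1) ≤ 4 * α * s := by
              nlinarith [two_sqrt_pow n, hα.le]
            have hp2 : 2 * α * ((n:ℝ)+1) / δ ≤ 4 * α * s / δ := by gcongr
            have hp3 : 4 * α * s / δ = (4 * α / δ) * s := by ring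
            nlinarith [mul_nonneg hα.le hs0]
          have hNN : 0 ≤ (N:ℝ) * ((N:ℝ) - 1) := by
            have : (1:ℝ) ≤ (N:ℝ) := by exact_mod_cast hN1
            nlinarith
          calc (N:ℝ) * ((N:ℝ) - 1) * (2 * α * ((n:ℝ)+1) / δ)
              ≤ (N:ℝ) * ((N:ℝ) - 1) * ((4 * α / δ + α) * s) :=
                mul_le_mul_of_nonneg_left hinner hNN
            _ = (N:ℝ) * ((N:ℝ) - 1) * (4 * α / δ + α) * s := by ring
end
end

section
/- (Strong consistency) Let β : ℕ → (0,∞) with β(n) → ∞, and define the set of quasi-minimizers χ̄_n^β := {x ∈ D_I^δ : V_n(x) < inf_{D_I^δ} V_n + 1/β(n)}. Then for every open neighborhood N of χ̄ := argmin_{D_I^δ} V, almost surely there exists n₀ such that χ̄_n^β ⊆ N for all n ≥ n₀. -/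
open MeasureTheory Finset

noncomputable section

open ProbabilityTheory Filter

/-- Empirical extended variance based on the first `n` samples. -/
def empVar {d : ℕ} {ι : Type*} [Fintype ι] [LinearOrder ι] [Nonempty ι]
    (Λ : ι → ι → ℝ) {Ω : Type*} (X : ℕ → Ω → Eu d) (n : ℕ) (ϖ : Ω)
    (x : ι → Eu d) : ℝ :=
  (1 / (2 * n : ℝ)) * ∑ k ∈ Finset.range n, gfun Λ x (X k ϖ)

open Topology

set_option linter.unusedSectionVars false

section aux
variable {d : ℕ} {ι : Type*} [Fintype ι] [LinearOrder ι] [Nonempty ι]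

lemma vFilter_nonempty (x : ι → Eu d) (ω : Eu d) :
    (Finset.univ.filter fun i => ∀ j, dist (x i) ω ≤ dist (x j) ω).Nonempty := by
  obtain ⟨i, -, hi⟩ := Finset.exists_min_image Finset.univ
    (fun j => dist (x j) ω) ⟨Classical.arbitrary ι, Finset.mem_univ _⟩
  exact ⟨i, Finset.mem_filter.2 ⟨Finset.mem_univ _, fun j => hi j (Finset.mem_univ _)⟩⟩

lemma vIndex_mem (x : ι → Eu d) (ω : Eu d) :
    vIndex x ω ∈ Finset.univ.filter fun i => ∀ j, dist (x i) ω ≤ dist (x j) ω :=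
  Finset.min'_mem _ (vFilter_nonempty x ω)

lemma vIndex_le (x : ι → Eu d) (ω : Eu d) (j : ι) :
    dist (x (vIndex x ω)) ω ≤ dist (x j) ω :=
  (Finset.mem_filter.1 (vIndex_mem x ω)).2 j

lemma vIndex_eq_of (x : ι → Eu d) (ω : Eu d) (i : ι)
    (h1 : ∀ j, dist (x i) ω ≤ dist (x j) ω)
    (h2 : ∀ i', (∀ j, dist (x i') ω ≤ dist (x j) ω) → i ≤ i') :
    vIndex x ω = i := by
  unfold vIndex
  apply le_antisymm
  · exact Finset.min'_le _ _ (Finset.mem_filter.2 ⟨Finset.mem_univ _, h1⟩)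
  · exact h2 _ (fun j => vIndex_le x ω j)

lemma vIndex_eq_iff (x : ι → Eu d) (ω : Eu d) (i : ι) :
    vIndex x ω = i ↔ (∀ j, dist (x i) ω ≤ dist (x j) ω) ∧
      ∀ i', i' < i → ¬ (∀ j, dist (x i') ω ≤ dist (x j) ω) := by
  constructor
  · rintro rfl
    refine ⟨vIndex_le x ω, fun i' hi' hprop => ?_⟩
    have : vIndex x ω ≤ i' := by
      unfold vIndex
      exact Finset.min'_le _ _ (Finset.mem_filter.2 ⟨Finset.mem_univ _, hprop⟩)
    exact absurd hi' (not_lt.2 this)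
  · rintro ⟨h1, h2⟩
    apply vIndex_eq_of x ω i h1
    intro i' hi'
    by_contra hlt
    exact h2 i' (lt_of_not_ge hlt) hi'

lemma measurableSet_vIndex (x : ι → Eu d) (i : ι) :
    MeasurableSet {ω : Eu d | vIndex x ω = i} := by
  have hC : ∀ i' : ι, MeasurableSet {ω : Eu d | ∀ j, dist (x i') ω ≤ dist (x j) ω} := by
    intro i'
    have : {ω : Eu d | ∀ j, dist (x i') ω ≤ dist (x j) ω}
        = ⋂ j, {ω : Eu d | dist (x i') ω ≤ dist (x j) ω} := by
      ext ω; simp [Set.mem_iInter]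
    rw [this]
    exact MeasurableSet.iInter fun j =>
      measurableSet_le (Continuous.measurable (continuous_const.dist continuous_id))
        (Continuous.measurable (continuous_const.dist continuous_id))
  have : {ω : Eu d | vIndex x ω = i} =
      {ω : Eu d | ∀ j, dist (x i) ω ≤ dist (x j) ω} ∩
        ⋂ (i' : ι), ⋂ (_ : i' < i), {ω : Eu d | ∀ j, dist (x i') ω ≤ dist (x j) ω}ᶜ := by
    ext ω
    simp only [Set.mem_setOf_eq, Set.mem_inter_iff, Set.mem_iInter, Set.mem_compl_iff,
      vIndex_eq_iff]
  rw [this]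
  exact (hC i).inter (MeasurableSet.iInter fun i' =>
    MeasurableSet.iInter fun _ => (hC i').compl)

end aux

section aux2
set_option linter.unusedSectionVars false
variable {d : ℕ} {ι : Type*} [Fintype ι] [LinearOrder ι] [Nonempty ι]

lemma isClosed_cube : IsClosed (cube d) := by
  have : cube d = ⋂ i, (fun ω : Eu d => ω i) ⁻¹' Set.Icc (0:ℝ) 1 := by
    ext ω; simp [cube, Set.mem_iInter]
  rw [this]
  exact isClosed_iInter fun i =>
    IsClosed.preimage (by fun_prop) isClosed_Icc

lemma measurableSet_cube : MeasurableSet (cube d) := isClosed_cube.measurableSet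

lemma norm_sub_le_sqrt {a b : Eu d} (ha : a ∈ cube d) (hb : b ∈ cube d) :
    ‖a - b‖ ≤ Real.sqrt d := by
  rw [EuclideanSpace.norm_eq]
  apply Real.sqrt_le_sqrt
  calc ∑ i, ‖(a - b) i‖ ^ 2 ≤ ∑ _i : Fin d, (1:ℝ) := by
        apply Finset.sum_le_sum
        intro i _
        have hai := ha i; have hbi := hb i
        have hab : (a - b) i = a i - b i := rfl
        rw [hab]
        have h2 : ‖a i - b i‖ = |a i - b i| := Real.norm_eq_abs _
        rw [h2, sq_abs]
        nlinarith [hai.1, hai.2, hbi.1, hbi.2]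
    _ = d := by simp

lemma sq_norm_sub_le {a b : Eu d} (ha : a ∈ cube d) (hb : b ∈ cube d) :
    ‖a - b‖ ^ 2 ≤ (d : ℝ) := by
  have h := norm_sub_le_sqrt ha hb
  have h0 : (0:ℝ) ≤ ‖a - b‖ := norm_nonneg _
  nlinarith [Real.sq_sqrt (by positivity : (0:ℝ) ≤ (d:ℝ)), Real.sqrt_nonneg (d:ℝ)]

lemma gfun_nonneg {Λ : ι → ι → ℝ} (hΛ : ∀ i j, Λ i j ∈ Set.Icc (0:ℝ) 1)
    (x : ι → Eu d) (ω : Eu d) : 0 ≤ gfun Λ x ω :=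
  Finset.sum_nonneg fun j _ => mul_nonneg ((hΛ _ j).1) (by positivity)

lemma gfun_le {Λ : ι → ι → ℝ} (hΛ : ∀ i j, Λ i j ∈ Set.Icc (0:ℝ) 1)
    {x : ι → Eu d} (hx : ∀ i, x i ∈ cube d) {ω : Eu d} (hω : ω ∈ cube d) :
    gfun Λ x ω ≤ (Fintype.card ι : ℝ) * d := by
  calc gfun Λ x ω ≤ ∑ _j : ι, (d:ℝ) := by
        apply Finset.sum_le_sum
        intro j _
        calc Λ (vIndex x ω) j * ‖x j - ω‖ ^ 2 ≤ 1 * ‖x j - ω‖ ^ 2 := by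
              apply mul_le_mul_of_nonneg_right (hΛ _ j).2 (by positivity)
          _ = ‖x j - ω‖ ^ 2 := one_mul _
          _ ≤ d := sq_norm_sub_le (hx j) hω
    _ = (Fintype.card ι : ℝ) * d := by simp [Finset.sum_const, nsmul_eq_mul]

lemma abs_gfun_le {Λ : ι → ι → ℝ} (hΛ : ∀ i j, Λ i j ∈ Set.Icc (0:ℝ) 1)
    {x : ι → Eu d} (hx : ∀ i, x i ∈ cube d) {ω : Eu d} (hω : ω ∈ cube d) :
    |gfun Λ x ω| ≤ (Fintype.card ι : ℝ) * d := by
  rw [abs_of_nonneg (gfun_nonneg hΛ x ω)]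
  exact gfun_le hΛ hx hω

def Tset (x : ι → Eu d) (t : ℝ) : Set (Eu d) :=
  {ω | ∃ i j, i ≠ j ∧ |dist (x i) ω - dist (x j) ω| ≤ t}

lemma Tset_mono (x : ι → Eu d) {t t' : ℝ} (h : t ≤ t') : Tset x t ⊆ Tset x t' := by
  rintro ω ⟨i, j, hij, hle⟩
  exact ⟨i, j, hij, hle.trans h⟩

lemma isClosed_Tset (x : ι → Eu d) (t : ℝ) : IsClosed (Tset x t) := by
  have : Tset x t = ⋃ i, ⋃ j, {ω : Eu d | i ≠ j ∧ |dist (x i) ω - dist (x j) ω| ≤ t} := by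
    ext ω; simp [Tset, Set.mem_iUnion]
  rw [this]
  apply isClosed_iUnion_of_finite
  intro i
  apply isClosed_iUnion_of_finite
  intro j
  by_cases hij : i = j
  · have : {ω : Eu d | i ≠ j ∧ |dist (x i) ω - dist (x j) ω| ≤ t} = ∅ := by
      ext ω; simp [hij]
    rw [this]; exact isClosed_empty
  · have : {ω : Eu d | i ≠ j ∧ |dist (x i) ω - dist (x j) ω| ≤ t}
        = {ω : Eu d | |dist (x i) ω - dist (x j) ω| ≤ t} := by
      ext ω; simp [hij]
    rw [this]
    have hc : Continuous fun ω : Eu d => |dist (x i) ω - dist (x j) ω| :=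
      ((continuous_const.dist continuous_id).sub (continuous_const.dist continuous_id)).abs
    exact isClosed_le hc continuous_const

lemma measurableSet_Tset (x : ι → Eu d) (t : ℝ) : MeasurableSet (Tset x t) :=
  (isClosed_Tset x t).measurableSet

lemma vIndex_stable {x y : ι → Eu d} {ω : Eu d} {r : ℝ}
    (hxy : ∀ i, dist (x i) (y i) ≤ r) (hω : ω ∉ Tset x (2 * r)) :
    vIndex y ω = vIndex x ω := by
  set i₀ := vIndex x ω with hi₀
  have key : ∀ j, j ≠ i₀ → dist (y i₀) ω < dist (y j) ω := by
    intro j hj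
    have h1 : dist (x i₀) ω ≤ dist (x j) ω := vIndex_le x ω j
    have h2 : ¬ |dist (x i₀) ω - dist (x j) ω| ≤ 2 * r := by
      intro hc
      exact hω ⟨i₀, j, fun h => hj h.symm, hc⟩
    have h3 : 2 * r < dist (x j) ω - dist (x i₀) ω := by
      rw [abs_le, not_and_or] at h2
      rcases h2 with h | h
      · push_neg at h; linarith
      · push_neg at h; linarith
    have h4 : dist (y i₀) ω ≤ dist (x i₀) ω + r := by
      have := dist_triangle (y i₀) (x i₀) ω
      have h5 := hxy i₀
      rw [dist_comm (x i₀) (y i₀)] at h5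
      linarith
    have h6 : dist (x j) ω ≤ dist (y j) ω + r := by
      have := dist_triangle (x j) (y j) ω
      have := hxy j
      linarith
    linarith
  apply vIndex_eq_of
  · intro j
    by_cases hj : j = i₀
    · rw [hj]
    · exact (key j hj).le
  · intro i' hi'
    by_contra hlt
    push_neg at hlt
    have hne : i' ≠ i₀ := ne_of_lt hlt
    have := key i' hne
    have := hi' i₀
    linarith

end aux2

section aux3
set_option linter.unusedSectionVars false
variable {d : ℕ} {ι : Type*} [Fintype ι] [LinearOrder ι] [Nonempty ι]

lemma gfun_eq_sum_indicator (Λ : ι → ι → ℝ) (x : ι → Eu d) (ω : Eu d) :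
    gfun Λ x ω = ∑ i, Set.indicator {ω' : Eu d | vIndex x ω' = i}
      (fun ω' => ∑ j, Λ i j * ‖x j - ω'‖ ^ 2) ω := by
  rw [Finset.sum_eq_single (vIndex x ω)]
  · rw [Set.indicator_of_mem (by simp : ω ∈ {ω' : Eu d | vIndex x ω' = vIndex x ω})]
    rfl
  · intro i _ hi
    rw [Set.indicator_of_notMem]
    simp only [Set.mem_setOf_eq]
    exact fun h => hi h.symm
  · intro h
    exact absurd (Finset.mem_univ _) h

lemma measurable_gfun (Λ : ι → ι → ℝ) (x : ι → Eu d) : Measurable (gfun Λ x) := by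
  have : gfun Λ x = fun ω => ∑ i, Set.indicator {ω' : Eu d | vIndex x ω' = i}
      (fun ω' => ∑ j, Λ i j * ‖x j - ω'‖ ^ 2) ω := funext (gfun_eq_sum_indicator Λ x)
  rw [this]
  apply Finset.measurable_sum
  intro i _
  apply Measurable.indicator _ (measurableSet_vIndex x i)
  apply Finset.measurable_sum
  intro j _
  exact (measurable_const.mul ((continuous_const.sub continuous_id).norm.pow 2).measurable)

lemma gfun_diff_le {Λ : ι → ι → ℝ} (hΛ : ∀ i j, Λ i j ∈ Set.Icc (0:ℝ) 1)
    {x y : ι → Eu d} (hx : ∀ i, x i ∈ cube d) (hy : ∀ i, y i ∈ cube d)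
    {ω : Eu d} (hω : ω ∈ cube d) {r : ℝ} (hr : 0 ≤ r)
    (hxy : ∀ i, dist (x i) (y i) ≤ r) :
    |gfun Λ y ω - gfun Λ x ω| ≤ (Fintype.card ι : ℝ) * (2 * Real.sqrt d) * r
      + Set.indicator (Tset x (2 * r)) (fun _ => 2 * ((Fintype.card ι : ℝ) * d)) ω := by
  by_cases hT : ω ∈ Tset x (2 * r)
  · rw [Set.indicator_of_mem hT]
    have h1 := abs_gfun_le hΛ hx hω
    have h2 := abs_gfun_le hΛ hy hω
    have h3 : |gfun Λ y ω - gfun Λ x ω| ≤ |gfun Λ y ω| + |gfun Λ x ω| := abs_sub _ _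
    have h4 : (0:ℝ) ≤ (Fintype.card ι : ℝ) * (2 * Real.sqrt d) * r := by positivity
    linarith
  · rw [Set.indicator_of_notMem hT, add_zero]
    have hv : vIndex y ω = vIndex x ω := vIndex_stable hxy hT
    have : gfun Λ y ω - gfun Λ x ω
        = ∑ j, Λ (vIndex x ω) j * (‖y j - ω‖ ^ 2 - ‖x j - ω‖ ^ 2) := by
      unfold gfun
      rw [hv, ← Finset.sum_sub_distrib]
      congr 1; ext j; ring
    rw [this]
    calc |∑ j, Λ (vIndex x ω) j * (‖y j - ω‖ ^ 2 - ‖x j - ω‖ ^ 2)|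
        ≤ ∑ j, |Λ (vIndex x ω) j * (‖y j - ω‖ ^ 2 - ‖x j - ω‖ ^ 2)| :=
          Finset.abs_sum_le_sum_abs _ _
      _ ≤ ∑ _j : ι, 2 * Real.sqrt d * r := by
          apply Finset.sum_le_sum
          intro j _
          rw [abs_mul]
          have hΛj : |Λ (vIndex x ω) j| ≤ 1 := by
            rw [abs_le]; exact ⟨by linarith [(hΛ (vIndex x ω) j).1], (hΛ (vIndex x ω) j).2⟩
          have hnorm : |‖y j - ω‖ ^ 2 - ‖x j - ω‖ ^ 2| ≤ 2 * Real.sqrt d * r := by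
            have e : ‖y j - ω‖ ^ 2 - ‖x j - ω‖ ^ 2
                = (‖y j - ω‖ + ‖x j - ω‖) * (‖y j - ω‖ - ‖x j - ω‖) := by ring
            rw [e, abs_mul]
            have h1 : ‖y j - ω‖ ≤ Real.sqrt d := norm_sub_le_sqrt (hy j) hω
            have h2 : ‖x j - ω‖ ≤ Real.sqrt d := norm_sub_le_sqrt (hx j) hω
            have h3 : |‖y j - ω‖ + ‖x j - ω‖| ≤ 2 * Real.sqrt d := by
              rw [abs_of_nonneg (by positivity)]; linarith
            have h4 : |‖y j - ω‖ - ‖x j - ω‖| ≤ r := by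
              have := abs_norm_sub_norm_le (y j - ω) (x j - ω)
              have he : y j - ω - (x j - ω) = y j - x j := by abel
              rw [he] at this
              have : |‖y j - ω‖ - ‖x j - ω‖| ≤ ‖y j - x j‖ := this
              have hd : ‖y j - x j‖ = dist (x j) (y j) := by
                rw [dist_comm, dist_eq_norm]
              rw [hd] at this
              exact this.trans (hxy j)
            exact mul_le_mul h3 h4 (abs_nonneg _) (by positivity)
          have := mul_le_mul hΛj hnorm (abs_nonneg _) zero_le_one
          rw [one_mul] at this
          exact this
      _ = (Fintype.card ι : ℝ) * (2 * Real.sqrt d) * r := by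
          rw [Finset.sum_const, nsmul_eq_mul, Finset.card_univ]; ring

end aux3


section aux4
set_option linter.unusedSectionVars false
variable {d : ℕ} {ι : Type*} [Fintype ι] [LinearOrder ι] [Nonempty ι]
variable {P : Measure (Eu d)} [IsProbabilityMeasure P]

lemma bisector_null {a b : Eu d} (hab : a ≠ b) :
    volume {ω : Eu d | dist a ω = dist b ω} = 0 := by
  set u := b - a with hu
  have hu0 : u ≠ 0 := sub_ne_zero.2 (fun h => hab h.symm)
  set c : ℝ := (‖b‖ ^ 2 - ‖a‖ ^ 2) / 2 with hc
  set f : Eu d →ₗ[ℝ] ℝ :=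
    { toFun := fun ω => inner ℝ u ω
      map_add' := fun ω₁ ω₂ => inner_add_right u ω₁ ω₂
      map_smul' := fun m ω => real_inner_smul_right u ω m } with hf
  have hfu : f u = ‖u‖ ^ 2 := real_inner_self_eq_norm_sq u
  have hnu : (0:ℝ) < ‖u‖ ^ 2 := pow_pos (norm_pos_iff.2 hu0) 2
  have hset : {ω : Eu d | dist a ω = dist b ω} = {ω : Eu d | f ω = c} := by
    ext ω
    simp only [Set.mem_setOf_eq, dist_eq_norm]
    constructor
    · intro h
      have h2 : ‖a - ω‖ ^ 2 = ‖b - ω‖ ^ 2 := by rw [h]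
      rw [norm_sub_sq_real, norm_sub_sq_real] at h2
      have : inner ℝ u ω = (‖b‖^2 - ‖a‖^2)/2 := by
        have h3 : (inner ℝ u ω : ℝ) = inner ℝ b ω - inner ℝ a ω := by
          rw [hu, inner_sub_left]
        rw [h3]; linarith
      exact this
    · intro h
      have h3 : (inner ℝ u ω : ℝ) = inner ℝ b ω - inner ℝ a ω := by
        rw [hu, inner_sub_left]
      have h4 : (inner ℝ b ω : ℝ) - inner ℝ a ω = (‖b‖^2 - ‖a‖^2)/2 := by
        rw [← h3]; exact h
      have h5 : ‖a - ω‖ ^ 2 = ‖b - ω‖ ^ 2 := by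
        rw [norm_sub_sq_real, norm_sub_sq_real]; linarith
      have h6 : (0:ℝ) ≤ ‖a - ω‖ := norm_nonneg _
      have h7 : (0:ℝ) ≤ ‖b - ω‖ := norm_nonneg _
      nlinarith
  set ω₀ : Eu d := (c / ‖u‖ ^ 2) • u with hω₀
  have hfω₀ : f ω₀ = c := by
    show (inner ℝ u ((c / ‖u‖ ^ 2) • u) : ℝ) = c
    rw [real_inner_smul_right, real_inner_self_eq_norm_sq]
    field_simp
  set A : AffineSubspace ℝ (Eu d) := AffineSubspace.mk' ω₀ (LinearMap.ker f) with hA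
  have hsetA : {ω : Eu d | f ω = c} = (A : Set (Eu d)) := by
    ext ω
    rw [Set.mem_setOf_eq, SetLike.mem_coe, AffineSubspace.mem_mk']
    simp only [vsub_eq_sub, LinearMap.mem_ker, map_sub]
    constructor
    · intro h; rw [h, hfω₀]; ring
    · intro h; have := sub_eq_zero.1 h; rw [this, hfω₀]
  have hAne : A ≠ ⊤ := by
    intro htop
    have : u ∈ LinearMap.ker f := by
      rw [← AffineSubspace.direction_mk' ω₀ (LinearMap.ker f), ← hA, htop,
        AffineSubspace.direction_top]
      trivial
    rw [LinearMap.mem_ker, hfu] at this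
    exact absurd this (ne_of_gt hnu)
  rw [hset, hsetA]
  exact MeasureTheory.Measure.addHaar_affineSubspace volume A hAne

lemma Tset_small (hPB : ∀ s : Set (Eu d), MeasurableSet s →
      P s ≤ ENNReal.ofReal B * volume s) {x : ι → Eu d}
    (hx : ∀ i j : ι, i ≠ j → x i ≠ x j) {ε : ℝ} (hε : 0 < ε) :
    ∃ t : ℝ, 0 < t ∧ (P (Tset x t)).toReal < ε := by
  have hmono : Antitone fun k : ℕ => Tset x (1 / (k + 1 : ℝ)) := by
    intro k k' hk
    apply Tset_mono
    apply one_div_le_one_div_of_le (by positivity)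
    exact_mod_cast Nat.add_le_add_right hk 1
  have hlim := tendsto_measure_iInter_atTop (μ := P)
    (fun k => (measurableSet_Tset x _).nullMeasurableSet) hmono ⟨0, measure_ne_top P _⟩
  have hnull : P (⋂ k : ℕ, Tset x (1 / (k + 1 : ℝ))) = 0 := by
    have hsub : (⋂ k : ℕ, Tset x (1 / (k + 1 : ℝ)))
        ⊆ ⋃ i : ι, ⋃ j : ι, {ω : Eu d | i ≠ j ∧ dist (x i) ω = dist (x j) ω} := by
      intro ω hω
      simp only [Set.mem_iInter] at hω
      by_contra hcon
      simp only [Set.mem_iUnion, Set.mem_setOf_eq, not_exists, not_and] at hcon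
      obtain ⟨i0, j0, hij0, -⟩ := hω 0
      obtain ⟨p, hpF, hpmin⟩ := Finset.exists_min_image
        (Finset.univ.filter fun p : ι × ι => p.1 ≠ p.2)
        (fun p => |dist (x p.1) ω - dist (x p.2) ω|)
        ⟨(i0, j0), Finset.mem_filter.2 ⟨Finset.mem_univ _, hij0⟩⟩
      have hp : p.1 ≠ p.2 := (Finset.mem_filter.1 hpF).2
      have hm : 0 < |dist (x p.1) ω - dist (x p.2) ω| :=
        abs_pos.2 (sub_ne_zero.2 (hcon p.1 p.2 hp))
      obtain ⟨k, hk⟩ := exists_nat_one_div_lt hm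
      obtain ⟨i, j, hij, hle⟩ := hω k
      have := hpmin (i, j) (Finset.mem_filter.2 ⟨Finset.mem_univ _, hij⟩)
      simp only at this
      linarith
    apply measure_mono_null hsub
    apply measure_iUnion_null
    intro i
    apply measure_iUnion_null
    intro j
    by_cases hij : i = j
    · have : {ω : Eu d | i ≠ j ∧ dist (x i) ω = dist (x j) ω} = ∅ := by
        ext ω; simp [hij]
      rw [this]; exact measure_empty
    · have hsub2 : {ω : Eu d | i ≠ j ∧ dist (x i) ω = dist (x j) ω}
          ⊆ {ω : Eu d | dist (x i) ω = dist (x j) ω} := fun ω h => h.2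
      apply measure_mono_null hsub2
      have hmeas : MeasurableSet {ω : Eu d | dist (x i) ω = dist (x j) ω} :=
        (isClosed_eq (continuous_const.dist continuous_id)
          (continuous_const.dist continuous_id)).measurableSet
      have := hPB _ hmeas
      rw [bisector_null (hx i j hij), mul_zero] at this
      exact le_antisymm this zero_le
  rw [hnull] at hlim
  have hev : ∀ᶠ k : ℕ in Filter.atTop,
      P (Tset x (1 / (k + 1 : ℝ))) < ENNReal.ofReal ε := by
    apply hlim.eventually_lt_const
    simp [hε]
  obtain ⟨k, hk⟩ := hev.exists
  refine ⟨1 / (k + 1 : ℝ), by positivity, ?_⟩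
  rw [← ENNReal.lt_ofReal_iff_toReal_lt (measure_ne_top P _)]
  exact hk

end aux4

section aux5
set_option linter.unusedSectionVars false
variable {d : ℕ} {ι : Type*} [Fintype ι] [LinearOrder ι] [Nonempty ι]
variable {P : Measure (Eu d)} [IsProbabilityMeasure P]

lemma compl_cube_null (hPcube : P (cube d) = 1) : P (cube d)ᶜ = 0 := by
  rw [measure_compl measurableSet_cube (measure_ne_top P _), hPcube, measure_univ, tsub_self]

lemma ae_mem_cube (hPcube : P (cube d) = 1) : ∀ᵐ ω ∂P, ω ∈ cube d := by
  rw [MeasureTheory.ae_iff]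
  have : {ω : Eu d | ¬ ω ∈ cube d} = (cube d)ᶜ := rfl
  rw [this]
  exact compl_cube_null hPcube

lemma integrable_of_cube_bound (hPcube : P (cube d) = 1) {f : Eu d → ℝ}
    (hf : Measurable f) {C : ℝ} (hC : ∀ ω ∈ cube d, |f ω| ≤ C) :
    Integrable f P := by
  apply (integrable_const C).mono' hf.aestronglyMeasurable
  filter_upwards [ae_mem_cube hPcube] with ω hω
  rw [Real.norm_eq_abs]
  exact hC ω hω

lemma integrable_gfun {Λ : ι → ι → ℝ} (hΛ : ∀ i j, Λ i j ∈ Set.Icc (0:ℝ) 1)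
    (hPcube : P (cube d) = 1) {x : ι → Eu d} (hx : ∀ i, x i ∈ cube d) :
    Integrable (gfun Λ x) P :=
  integrable_of_cube_bound hPcube (measurable_gfun Λ x)
    (fun ω hω => abs_gfun_le hΛ hx hω)

lemma extVar_eq_integral {Λ : ι → ι → ℝ} (hΛ : ∀ i j, Λ i j ∈ Set.Icc (0:ℝ) 1)
    (hPcube : P (cube d) = 1) {x : ι → Eu d} (hx : ∀ i, x i ∈ cube d) :
    extVar Λ P x = (1/2) * ∫ ω, gfun Λ x ω ∂P := by
  have hFmeas : ∀ i : ι, Measurable fun ω : Eu d => ∑ j, Λ i j * ‖x j - ω‖ ^ 2 := by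
    intro i
    apply Finset.measurable_sum
    intro j _
    exact measurable_const.mul ((continuous_const.sub continuous_id).norm.pow 2).measurable
  have hFbd : ∀ i : ι, ∀ ω ∈ cube d,
      |∑ j, Λ i j * ‖x j - ω‖ ^ 2| ≤ (Fintype.card ι : ℝ) * d := by
    intro i ω hω
    rw [abs_of_nonneg (Finset.sum_nonneg fun j _ => mul_nonneg (hΛ i j).1 (by positivity))]
    calc ∑ j, Λ i j * ‖x j - ω‖ ^ 2 ≤ ∑ _j : ι, (d:ℝ) := by
          apply Finset.sum_le_sum
          intro j _
          calc Λ i j * ‖x j - ω‖ ^ 2 ≤ 1 * ‖x j - ω‖ ^ 2 :=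
                mul_le_mul_of_nonneg_right (hΛ i j).2 (by positivity)
            _ = ‖x j - ω‖ ^ 2 := one_mul _
            _ ≤ d := sq_norm_sub_le (hx j) hω
      _ = (Fintype.card ι : ℝ) * d := by
          rw [Finset.sum_const, nsmul_eq_mul, Finset.card_univ]
  have hFint : ∀ i : ι, Integrable (fun ω : Eu d => ∑ j, Λ i j * ‖x j - ω‖ ^ 2) P :=
    fun i => integrable_of_cube_bound hPcube (hFmeas i) (hFbd i)
  have hsetae : ∀ i : ι, {ω : Eu d | vIndex x ω = i} =ᵐ[P] vCell x i := by
    intro i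
    rw [MeasureTheory.ae_eq_set]
    constructor
    · apply measure_mono_null (t := (cube d)ᶜ)
      · rintro ω ⟨h1, h2⟩
        intro hcube
        exact h2 ⟨hcube, h1⟩
      · exact compl_cube_null hPcube
    · have : vCell x i \ {ω : Eu d | vIndex x ω = i} = ∅ := by
        ext ω
        simp only [Set.mem_diff, Set.mem_setOf_eq, Set.mem_empty_iff_false, iff_false, not_and,
          not_not, vCell]
        exact fun h => h.2
      rw [this, measure_empty]
  calc extVar Λ P x = (1/2) * ∑ i, ∑ j, Λ i j * ∫ ω in vCell x i, ‖x j - ω‖ ^ 2 ∂P := rfl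
    _ = (1/2) * ∑ i, ∫ ω in vCell x i, ∑ j, Λ i j * ‖x j - ω‖ ^ 2 ∂P := by
        congr 1
        apply Finset.sum_congr rfl
        intro i _
        rw [MeasureTheory.integral_finset_sum]
        · apply Finset.sum_congr rfl
          intro j _
          rw [MeasureTheory.integral_const_mul]
        · intro j _
          apply Integrable.restrict
          apply Integrable.const_mul
          apply integrable_of_cube_bound hPcube
            ((continuous_const.sub continuous_id).norm.pow 2).measurable
          intro ω hω
          rw [abs_of_nonneg (sq_nonneg _)]
          exact sq_norm_sub_le (hx j) hω
    _ = (1/2) * ∑ i, ∫ ω in {ω : Eu d | vIndex x ω = i}, ∑ j, Λ i j * ‖x j - ω‖ ^ 2 ∂P := by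
        congr 1
        exact Finset.sum_congr rfl fun i _ =>
          (MeasureTheory.setIntegral_congr_set (hsetae i)).symm
    _ = (1/2) * ∑ i, ∫ ω, Set.indicator {ω' : Eu d | vIndex x ω' = i}
          (fun ω' => ∑ j, Λ i j * ‖x j - ω'‖ ^ 2) ω ∂P := by
        congr 1
        exact Finset.sum_congr rfl fun i _ =>
          (MeasureTheory.integral_indicator (measurableSet_vIndex x i)).symm
    _ = (1/2) * ∫ ω, ∑ i, Set.indicator {ω' : Eu d | vIndex x ω' = i}
          (fun ω' => ∑ j, Λ i j * ‖x j - ω'‖ ^ 2) ω ∂P := by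
        congr 1
        rw [MeasureTheory.integral_finset_sum]
        intro i _
        apply Integrable.indicator _ (measurableSet_vIndex x i)
        exact hFint i
    _ = (1/2) * ∫ ω, gfun Λ x ω ∂P := by
        congr 1
        apply MeasureTheory.integral_congr_ae
        filter_upwards with ω
        exact (gfun_eq_sum_indicator Λ x ω).symm

lemma extVar_diff_le {Λ : ι → ι → ℝ} (hΛ : ∀ i j, Λ i j ∈ Set.Icc (0:ℝ) 1)
    (hPcube : P (cube d) = 1) {x y : ι → Eu d}
    (hx : ∀ i, x i ∈ cube d) (hy : ∀ i, y i ∈ cube d) {r : ℝ} (hr : 0 ≤ r)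
    (hxy : ∀ i, dist (x i) (y i) ≤ r) :
    |extVar Λ P y - extVar Λ P x| ≤ (1/2) * ((Fintype.card ι : ℝ) * (2 * Real.sqrt d) * r
      + 2 * ((Fintype.card ι : ℝ) * d) * (P (Tset x (2 * r))).toReal) := by
  rw [extVar_eq_integral hΛ hPcube hx, extVar_eq_integral hΛ hPcube hy]
  have hintx := integrable_gfun hΛ hPcube hx
  have hinty := integrable_gfun hΛ hPcube hy
  rw [← mul_sub, ← MeasureTheory.integral_sub hinty hintx, abs_mul]
  have h1 : |(1:ℝ)/2| = 1/2 := by norm_num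
  rw [h1]
  apply mul_le_mul_of_nonneg_left _ (by norm_num : (0:ℝ) ≤ 1/2)
  calc |∫ ω, (gfun Λ y ω - gfun Λ x ω) ∂P|
      ≤ ∫ ω, |gfun Λ y ω - gfun Λ x ω| ∂P := by
        have := MeasureTheory.norm_integral_le_integral_norm
          (μ := P) (fun ω => gfun Λ y ω - gfun Λ x ω)
        simpa [Real.norm_eq_abs] using this
    _ ≤ ∫ ω, ((Fintype.card ι : ℝ) * (2 * Real.sqrt d) * r
          + Set.indicator (Tset x (2 * r))
            (fun _ => 2 * ((Fintype.card ι : ℝ) * d)) ω) ∂P := by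
        apply MeasureTheory.integral_mono_ae ((hinty.sub hintx).abs)
        · exact (integrable_const _).add
            ((integrable_const _).indicator (measurableSet_Tset x _))
        · filter_upwards [ae_mem_cube hPcube] with ω hω
          exact gfun_diff_le hΛ hx hy hω hr hxy
    _ = (Fintype.card ι : ℝ) * (2 * Real.sqrt d) * r
          + 2 * ((Fintype.card ι : ℝ) * d) * (P (Tset x (2 * r))).toReal := by
        rw [MeasureTheory.integral_add (integrable_const _)
          ((integrable_const _).indicator (measurableSet_Tset x _))]
        rw [MeasureTheory.integral_const, probReal_univ, one_smul]
        congr 1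
        rw [MeasureTheory.integral_indicator_const _ (measurableSet_Tset x _)]
        rw [smul_eq_mul, measureReal_def]; ring

end aux5


section aux6
set_option linter.unusedSectionVars false
variable {d : ℕ} {ι : Type*} [Fintype ι] [LinearOrder ι] [Nonempty ι]
variable {P : Measure (Eu d)} [IsProbabilityMeasure P]

lemma isCompact_sep (δ : ℝ) : IsCompact (sep δ : Set (ι → Eu d)) := by
  apply Metric.isCompact_of_isClosed_isBounded
  · have : (sep δ : Set (ι → Eu d)) = {x : ι → Eu d | ∀ i, x i ∈ cube d}
        ∩ ⋂ (i : ι), ⋂ (j : ι), {x : ι → Eu d | i ≠ j → δ ≤ dist (x i) (x j)} := by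
      ext x
      simp only [sep, Set.mem_setOf_eq, Set.mem_inter_iff, Set.mem_iInter]
    rw [this]
    apply IsClosed.inter
    · have : {x : ι → Eu d | ∀ i, x i ∈ cube d}
          = ⋂ i, (fun x : ι → Eu d => x i) ⁻¹' cube d := by
        ext x; simp [Set.mem_iInter]
      rw [this]
      exact isClosed_iInter fun i => isClosed_cube.preimage (continuous_apply i)
    · apply isClosed_iInter; intro i
      apply isClosed_iInter; intro j
      by_cases hij : i = j
      · have : {x : ι → Eu d | i ≠ j → δ ≤ dist (x i) (x j)} = Set.univ := by
          ext x; simp [hij]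
        rw [this]; exact isClosed_univ
      · have : {x : ι → Eu d | i ≠ j → δ ≤ dist (x i) (x j)}
            = {x : ι → Eu d | δ ≤ dist (x i) (x j)} := by
          ext x; simp [hij]
        rw [this]
        exact isClosed_le continuous_const
          ((continuous_apply i).dist (continuous_apply j))
  · rw [Metric.isBounded_iff]
    refine ⟨Real.sqrt d, fun x hx y hy => ?_⟩
    rw [dist_pi_le_iff (Real.sqrt_nonneg _)]
    intro i
    rw [dist_eq_norm]
    exact norm_sub_le_sqrt (hx.1 i) (hy.1 i)

lemma sep_distinct {δ : ℝ} (hδ : 0 < δ) {x : ι → Eu d} (hx : x ∈ (sep δ : Set (ι → Eu d)))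
    (i j : ι) (hij : i ≠ j) : x i ≠ x j := by
  intro he
  have := hx.2 i j hij
  rw [he, dist_self] at this
  linarith

lemma continuousOn_extVar {Λ : ι → ι → ℝ} (hΛ : ∀ i j, Λ i j ∈ Set.Icc (0:ℝ) 1)
    (hPcube : P (cube d) = 1) {B δ : ℝ} (hδ : 0 < δ)
    (hPB : ∀ s : Set (Eu d), MeasurableSet s → P s ≤ ENNReal.ofReal B * volume s) :
    ContinuousOn (extVar Λ P) (sep δ : Set (ι → Eu d)) := by
  set L : ℝ := (Fintype.card ι : ℝ) * (2 * Real.sqrt d) with hLdef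
  set M : ℝ := (Fintype.card ι : ℝ) * d with hMdef
  have hL : 0 ≤ L := by positivity
  have hM : 0 ≤ M := by positivity
  rw [Metric.continuousOn_iff]
  intro x hx ε hε
  obtain ⟨t, ht0, htP⟩ := Tset_small (B := B) hPB (sep_distinct hδ hx)
    (ε := ε / (2 * M + 1)) (by positivity)
  set r : ℝ := min (t / 2) ((ε / 2) / (L + 1)) with hrdef
  have hr0 : 0 < r := lt_min (by positivity) (by positivity)
  refine ⟨r, hr0, fun y hy hxy => ?_⟩
  have hcoord : ∀ i, dist (x i) (y i) ≤ r := by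
    intro i
    calc dist (x i) (y i) ≤ dist x y := dist_le_pi_dist x y i
      _ = dist y x := dist_comm x y
      _ ≤ r := hxy.le
  have hbound := extVar_diff_le hΛ hPcube hx.1 hy.1 hr0.le hcoord
  have hPT : (P (Tset x (2 * r))).toReal < ε / (2 * M + 1) := by
    have hsub : Tset x (2 * r) ⊆ Tset x t := by
      apply Tset_mono
      have : r ≤ t / 2 := min_le_left _ _
      linarith
    have := ENNReal.toReal_mono (measure_ne_top P _) (measure_mono hsub)
    linarith
  have hLr : L * r ≤ ε / 2 := by
    have h1 : r ≤ (ε / 2) / (L + 1) := min_le_right _ _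
    have h2 : L * r ≤ L * ((ε / 2) / (L + 1)) := mul_le_mul_of_nonneg_left h1 hL
    have h3 : L * ((ε / 2) / (L + 1)) ≤ ε / 2 := by
      rw [mul_div_assoc']
      rw [div_le_iff₀ (by positivity)]
      nlinarith
    linarith
  have hMr : 2 * M * (P (Tset x (2 * r))).toReal ≤ ε := by
    have h0 : (0:ℝ) ≤ (P (Tset x (2 * r))).toReal := ENNReal.toReal_nonneg
    have h1 : (P (Tset x (2 * r))).toReal * (2 * M + 1) < ε := by
      rw [← lt_div_iff₀ (by positivity)]
      exact hPT
    nlinarith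
  rw [Real.dist_eq]
  calc |extVar Λ P y - extVar Λ P x|
      ≤ (1/2) * (L * r + 2 * M * (P (Tset x (2 * r))).toReal) := hbound
    _ ≤ (1/2) * (ε / 2 + ε) := by
        apply mul_le_mul_of_nonneg_left _ (by norm_num)
        linarith
    _ < ε := by linarith

end aux6


lemma slln_aux {Ω : Type*} [MeasurableSpace Ω] (μ : Measure Ω) [IsProbabilityMeasure μ]
    {d : ℕ} (P : Measure (Eu d)) [IsProbabilityMeasure P]
    (X : ℕ → Ω → Eu d) (hmeas : ∀ n, Measurable (X n))
    (hindep : iIndepFun X μ)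
    (hlaw : ∀ n, Measure.map (X n) μ = P)
    (f : Eu d → ℝ) (hf : Measurable f) (hint : Integrable f P) :
    ∀ᵐ ϖ ∂μ, Tendsto (fun n : ℕ => (∑ k ∈ Finset.range n, f (X k ϖ)) / n)
      atTop (𝓝 (∫ ω, f ω ∂P)) := by
  have h0 : Integrable (fun ϖ => f (X 0 ϖ)) μ := by
    have := (MeasureTheory.integrable_map_measure
      (by rw [hlaw 0]; exact hf.aestronglyMeasurable) (hmeas 0).aemeasurable).1
    apply this
    rw [hlaw 0]; exact hint
  have hpair : Pairwise (Function.onFun (IndepFun · · μ) fun k ϖ => f (X k ϖ)) := by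
    intro i j hij
    exact (hindep.indepFun hij).comp hf hf
  have hident : ∀ i, IdentDistrib (fun ϖ => f (X i ϖ)) (fun ϖ => f (X 0 ϖ)) μ μ := by
    intro i
    have hXid : IdentDistrib (X i) (X 0) μ μ :=
      ⟨(hmeas i).aemeasurable, (hmeas 0).aemeasurable, by rw [hlaw i, hlaw 0]⟩
    exact hXid.comp hf
  have hmean : (∫ ϖ, f (X 0 ϖ) ∂μ) = ∫ ω, f ω ∂P := by
    rw [← hlaw 0, MeasureTheory.integral_map (hmeas 0).aemeasurable]
    rw [hlaw 0]; exact hf.aestronglyMeasurable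
  have := strong_law_ae_real (fun k ϖ => f (X k ϖ)) h0 hpair hident
  filter_upwards [this] with ϖ hϖ
  rwa [hmean] at hϖ


set_option maxHeartbeats 2000000 in
theorem stmt15 {d : ℕ} {ι : Type*} [Fintype ι] [LinearOrder ι] [Nonempty ι]
    (Λ : ι → ι → ℝ) (hΛmem : ∀ i j, Λ i j ∈ Set.Icc (0:ℝ) 1)
    (hΛsymm : ∀ i j, Λ i j = Λ j i) (hΛ0 : ∀ i, Λ i i = 1)
    (δ B : ℝ) (hδ : 0 < δ) (hB : 0 < B)
    (hne : (sep δ : Set (ι → Eu d)).Nonempty)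
    (P : Measure (Eu d)) [IsProbabilityMeasure P] (hPcube : P (cube d) = 1)
    (hPB : ∀ s : Set (Eu d), MeasurableSet s →
      P s ≤ ENNReal.ofReal B * volume s)
    {Ω : Type*} [MeasurableSpace Ω] (μ : Measure Ω) [IsProbabilityMeasure μ]
    (X : ℕ → Ω → Eu d) (hmeas : ∀ n, Measurable (X n))
    (hindep : iIndepFun X μ)
    (hlaw : ∀ n, Measure.map (X n) μ = P)
    (β : ℕ → ℝ) (hβpos : ∀ n, 0 < β n) (hβ : Tendsto β atTop atTop)
    (N : Set (ι → Eu d)) (hN : IsOpen N)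
    (hsub : {x ∈ (sep δ : Set (ι → Eu d)) |
        ∀ y ∈ (sep δ : Set (ι → Eu d)), extVar Λ P x ≤ extVar Λ P y} ⊆ N) :
    ∀ᵐ ϖ ∂μ, ∃ n₀ : ℕ, ∀ n ≥ n₀,
      {x ∈ (sep δ : Set (ι → Eu d)) |
        empVar Λ X n ϖ x <
          (⨅ y : (sep δ : Set (ι → Eu d)), empVar Λ X n ϖ y.1) + 1 / β n}
        ⊆ N := by
  classical
  set D := (sep δ : Set (ι → Eu d)) with hDdef
  set V := extVar Λ P with hVdef
  set L : ℝ := (Fintype.card ι : ℝ) * (2 * Real.sqrt d) with hLdef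
  set M : ℝ := (Fintype.card ι : ℝ) * d with hMdef
  have hL : 0 ≤ L := by positivity
  have hM : 0 ≤ M := by positivity
  have hDcomp : IsCompact D := isCompact_sep δ
  have hVcont : ContinuousOn V D := continuousOn_extVar hΛmem hPcube hδ hPB
  obtain ⟨xs, hxsD, hxsmin'⟩ := hDcomp.exists_isMinOn hne hVcont
  have hxsmin : ∀ y ∈ D, V xs ≤ V y := fun y hy => hxsmin' hy
  by_cases hDN : ∀ x ∈ D, x ∈ N
  · exact Filter.Eventually.of_forall (fun ϖ => ⟨0, fun n _ x hxq => hDN x hxq.1⟩)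
  push_neg at hDN
  obtain ⟨xb, hxbD, hxbN⟩ := hDN
  have hKne : (D ∩ Nᶜ).Nonempty := ⟨xb, hxbD, hxbN⟩
  have hKcomp : IsCompact (D ∩ Nᶜ) := hDcomp.inter_right hN.isClosed_compl
  obtain ⟨x₀, hx₀K, hx₀min'⟩ :=
    hKcomp.exists_isMinOn hKne (hVcont.mono Set.inter_subset_left)
  have hx₀min : ∀ y ∈ D ∩ Nᶜ, V x₀ ≤ V y := fun y hy => hx₀min' hy
  set m := V xs with hmdef
  set m' := V x₀ with hm'def
  have hmle : m ≤ m' := hxsmin x₀ hx₀K.1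
  have hmne : m ≠ m' := by
    intro he
    apply hx₀K.2
    apply hsub
    refine ⟨hx₀K.1, fun y hy => ?_⟩
    have h1 := hxsmin y hy
    rw [← hm'def, ← he]
    exact h1
  have hmm' : m < m' := lt_of_le_of_ne hmle hmne
  set ε := (m' - m) / (8 * (M + 1)) with hεdef
  have hε : 0 < ε := div_pos (by linarith) (by positivity)
  -- choice of radii
  have hrex : ∀ z : D, ∃ r : ℝ, 0 < r ∧ L * r ≤ ε ∧
      (P (Tset (z : ι → Eu d) (2 * r))).toReal < ε / (2 * M + 1) := by
    intro z
    obtain ⟨t, ht0, htP⟩ := Tset_small (B := B) hPB (sep_distinct hδ z.2)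
      (ε := ε / (2 * M + 1)) (by positivity)
    refine ⟨min (t / 2) (ε / (L + 1)), lt_min (by positivity) (by positivity), ?_, ?_⟩
    · have h1 : min (t / 2) (ε / (L + 1)) ≤ ε / (L + 1) := min_le_right _ _
      have h2 : L * min (t / 2) (ε / (L + 1)) ≤ L * (ε / (L + 1)) :=
        mul_le_mul_of_nonneg_left h1 hL
      have h3 : L * (ε / (L + 1)) ≤ ε := by
        rw [mul_div_assoc', div_le_iff₀ (by positivity)]
        nlinarith
      linarith
    · have hsub2 : Tset (z : ι → Eu d) (2 * min (t / 2) (ε / (L + 1)))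
          ⊆ Tset (z : ι → Eu d) t := by
        apply Tset_mono
        have := min_le_left (t / 2) (ε / (L + 1))
        have h0 : 0 < min (t / 2) (ε / (L + 1)) := lt_min (by positivity) (by positivity)
        linarith
      have := ENNReal.toReal_mono (measure_ne_top P _) (measure_mono hsub2)
      linarith
  choose r hr0 hrL hrP using hrex
  have hcover : D ⊆ ⋃ z : D, Metric.ball (z : ι → Eu d) (r z) :=
    fun x hx => Set.mem_iUnion.2 ⟨⟨x, hx⟩, Metric.mem_ball_self (hr0 _)⟩
  obtain ⟨s, hscover⟩ := hDcomp.elim_finite_subcover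
    (fun z : D => Metric.ball (z : ι → Eu d) (r z)) (fun z => Metric.isOpen_ball) hcover
  -- indicator functions
  set f2 : D → Eu d → ℝ :=
    fun z => Set.indicator (Tset (z : ι → Eu d) (2 * r z) ∩ cube d) (fun _ => (1:ℝ))
    with hf2def
  have hf2meas : ∀ z : D, Measurable (f2 z) := fun z =>
    measurable_const.indicator ((measurableSet_Tset _ _).inter measurableSet_cube)
  have hf2int : ∀ z : D, Integrable (f2 z) P := fun z =>
    (integrable_const (1:ℝ)).indicator ((measurableSet_Tset _ _).inter measurableSet_cube)
  have hf2intgr : ∀ z : D, ∫ ω, f2 z ω ∂P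
      = (P (Tset (z : ι → Eu d) (2 * r z) ∩ cube d)).toReal := by
    intro z
    rw [hf2def]
    rw [MeasureTheory.integral_indicator_const (1:ℝ)
      ((measurableSet_Tset _ _).inter measurableSet_cube)]
    simp
    rfl
  have hf2lim : ∀ z : D, (P (Tset (z : ι → Eu d) (2 * r z) ∩ cube d)).toReal
      < ε / (2 * M + 1) := fun z =>
    lt_of_le_of_lt (ENNReal.toReal_mono (measure_ne_top P _)
      (measure_mono Set.inter_subset_left)) (hrP z)
  -- almost sure events
  have hcubeAS : ∀ᵐ ϖ ∂μ, ∀ k, X k ϖ ∈ cube d := by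
    rw [MeasureTheory.ae_all_iff]
    intro k
    rw [MeasureTheory.ae_iff]
    have heq : {ϖ | ¬ X k ϖ ∈ cube d} = X k ⁻¹' (cube d)ᶜ := rfl
    rw [heq, ← Measure.map_apply (hmeas k) measurableSet_cube.compl, hlaw k]
    exact compl_cube_null hPcube
  have hgAS : ∀ᵐ ϖ ∂μ, ∀ z ∈ (↑s : Set D),
      Tendsto (fun n : ℕ => (∑ k ∈ Finset.range n, gfun Λ (z : ι → Eu d) (X k ϖ)) / n)
        atTop (𝓝 (∫ ω, gfun Λ (z : ι → Eu d) ω ∂P)) :=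
    (MeasureTheory.ae_ball_iff s.countable_toSet).2 fun z _ =>
      slln_aux μ P X hmeas hindep hlaw _ (measurable_gfun Λ _)
        (integrable_gfun hΛmem hPcube z.2.1)
  have hfAS : ∀ᵐ ϖ ∂μ, ∀ z ∈ (↑s : Set D),
      Tendsto (fun n : ℕ => (∑ k ∈ Finset.range n, f2 z (X k ϖ)) / n)
        atTop (𝓝 (∫ ω, f2 z ω ∂P)) :=
    (MeasureTheory.ae_ball_iff s.countable_toSet).2 fun z _ =>
      slln_aux μ P X hmeas hindep hlaw _ (hf2meas z) (hf2int z)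
  have hxsAS : ∀ᵐ ϖ ∂μ,
      Tendsto (fun n : ℕ => (∑ k ∈ Finset.range n, gfun Λ xs (X k ϖ)) / n)
        atTop (𝓝 (∫ ω, gfun Λ xs ω ∂P)) :=
    slln_aux μ P X hmeas hindep hlaw _ (measurable_gfun Λ _)
      (integrable_gfun hΛmem hPcube hxsD.1)
  filter_upwards [hcubeAS, hgAS, hfAS, hxsAS] with ϖ hcube hg hf hxsT
  -- eventual statements in n
  have hev : ∀ᶠ n : ℕ in atTop,
      (∀ z ∈ s, |(∑ k ∈ Finset.range n, gfun Λ (z : ι → Eu d) (X k ϖ)) / n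
          - ∫ ω, gfun Λ (z : ι → Eu d) ω ∂P| < ε
        ∧ (∑ k ∈ Finset.range n, f2 z (X k ϖ)) / n < ε / (2 * M + 1))
      ∧ |(∑ k ∈ Finset.range n, gfun Λ xs (X k ϖ)) / n - ∫ ω, gfun Λ xs ω ∂P| < ε
      ∧ 1 / β n < ε ∧ 1 ≤ n := by
    refine Filter.Eventually.and ?_ (Filter.Eventually.and ?_ (Filter.Eventually.and ?_ ?_))
    · rw [Filter.eventually_all_finset]
      intro z hz
      refine Filter.Eventually.and ?_ ?_
      · have h1 := Metric.tendsto_atTop.1 (hg z hz) ε hε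
        obtain ⟨Nz, hNz⟩ := h1
        rw [Filter.eventually_atTop]
        exact ⟨Nz, fun n hn => by have := hNz n hn; rwa [Real.dist_eq] at this⟩
      · have := (hf z hz)
        rw [hf2intgr z] at this
        exact this.eventually_lt_const (hf2lim z)
    · have h1 := Metric.tendsto_atTop.1 hxsT ε hε
      obtain ⟨Nz, hNz⟩ := h1
      rw [Filter.eventually_atTop]
      exact ⟨Nz, fun n hn => by have := hNz n hn; rwa [Real.dist_eq] at this⟩
    · have h1 := hβ.eventually_ge_atTop (1 / ε + 1)
      filter_upwards [h1] with n hn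
      have hb := hβpos n
      rw [div_lt_iff₀ hb]
      have h2 : 1 / ε * ε = 1 := by field_simp
      nlinarith
    · exact Filter.eventually_ge_atTop 1
  obtain ⟨n₀, hn₀⟩ := Filter.eventually_atTop.1 hev
  refine ⟨n₀, fun n hn x hxq => ?_⟩
  obtain ⟨hxD, hxlt⟩ := hxq
  obtain ⟨hzall, hxsev, hβev, hn1⟩ := hn₀ n hn
  have hn0 : (0:ℝ) < n := by exact_mod_cast hn1
  -- find covering center
  have hxmem := hscover hxD
  simp only [Set.mem_iUnion] at hxmem
  obtain ⟨z, hzs, hxz⟩ := hxmem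
  have hcoord : ∀ i, dist ((z : ι → Eu d) i) (x i) ≤ r z := by
    intro i
    calc dist ((z : ι → Eu d) i) (x i) ≤ dist (z : ι → Eu d) x := dist_le_pi_dist _ _ i
      _ = dist x (z : ι → Eu d) := dist_comm _ _
      _ ≤ r z := (Metric.mem_ball.1 hxz).le
  -- per-sample bound
  set Sg : (ι → Eu d) → ℝ := fun w => ∑ k ∈ Finset.range n, gfun Λ w (X k ϖ) with hSgdef
  have hsamp : ∀ k ∈ Finset.range n,
      |gfun Λ x (X k ϖ) - gfun Λ (z : ι → Eu d) (X k ϖ)|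
        ≤ L * r z + 2 * M * f2 z (X k ϖ) := by
    intro k _
    have h1 := gfun_diff_le (Λ := Λ) hΛmem (x := (z : ι → Eu d)) (y := x)
      z.2.1 hxD.1 (hcube k) (hr0 z).le hcoord
    rw [← hLdef, ← hMdef] at h1
    have h2 : Set.indicator (Tset (z : ι → Eu d) (2 * r z)) (fun _ => 2 * M) (X k ϖ)
        = 2 * M * f2 z (X k ϖ) := by
      by_cases hTk : X k ϖ ∈ Tset (z : ι → Eu d) (2 * r z)
      · have hf2v : f2 z (X k ϖ) = 1 :=
          Set.indicator_of_mem (Set.mem_inter hTk (hcube k)) _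
        rw [Set.indicator_of_mem hTk, hf2v]
        ring
      · have hf2v : f2 z (X k ϖ) = 0 :=
          Set.indicator_of_notMem (fun hc => hTk hc.1) _
        rw [Set.indicator_of_notMem hTk, hf2v]
        ring
    rw [h2] at h1
    exact h1
  have hSdiff : |Sg x - Sg (z : ι → Eu d)|
      ≤ n * (L * r z) + 2 * M * (∑ k ∈ Finset.range n, f2 z (X k ϖ)) := by
    rw [hSgdef]
    simp only
    rw [← Finset.sum_sub_distrib]
    calc |∑ k ∈ Finset.range n, (gfun Λ x (X k ϖ) - gfun Λ (z : ι → Eu d) (X k ϖ))|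
        ≤ ∑ k ∈ Finset.range n,
            |gfun Λ x (X k ϖ) - gfun Λ (z : ι → Eu d) (X k ϖ)| :=
          Finset.abs_sum_le_sum_abs _ _
      _ ≤ ∑ k ∈ Finset.range n, (L * r z + 2 * M * f2 z (X k ϖ)) :=
          Finset.sum_le_sum hsamp
      _ = n * (L * r z) + 2 * M * (∑ k ∈ Finset.range n, f2 z (X k ϖ)) := by
          rw [Finset.sum_add_distrib, Finset.sum_const, Finset.card_range,
            ← Finset.mul_sum, nsmul_eq_mul]
  have hf2nonneg : (0:ℝ) ≤ ∑ k ∈ Finset.range n, f2 z (X k ϖ) := by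
    apply Finset.sum_nonneg
    intro k _
    rw [hf2def]
    exact Set.indicator_nonneg (fun _ _ => zero_le_one) _
  have hA : (∑ k ∈ Finset.range n, f2 z (X k ϖ)) / n < ε / (2 * M + 1) := (hzall z hzs).2
  -- empirical variation bounds
  have hempeq : ∀ w : ι → Eu d, empVar Λ X n ϖ w = 1 / (2 * (n:ℝ)) * Sg w := fun w => rfl
  have hVn_xz : |empVar Λ X n ϖ x - empVar Λ X n ϖ (z : ι → Eu d)| ≤ ε := by
    have e1 : empVar Λ X n ϖ x - empVar Λ X n ϖ (z : ι → Eu d)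
        = 1 / (2 * (n:ℝ)) * (Sg x - Sg (z : ι → Eu d)) := by
      rw [hempeq, hempeq]; ring
    rw [e1, abs_mul, abs_of_nonneg (by positivity : (0:ℝ) ≤ 1 / (2 * (n:ℝ)))]
    have h3 : 1 / (2 * (n:ℝ)) * |Sg x - Sg (z : ι → Eu d)|
        ≤ 1 / (2 * (n:ℝ)) * (n * (L * r z) + 2 * M * (∑ k ∈ Finset.range n, f2 z (X k ϖ))) :=
      mul_le_mul_of_nonneg_left hSdiff (by positivity)
    have h4 : 1 / (2 * (n:ℝ)) * (n * (L * r z) + 2 * M * (∑ k ∈ Finset.range n, f2 z (X k ϖ)))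
        = (1/2) * (L * r z) + M * ((∑ k ∈ Finset.range n, f2 z (X k ϖ)) / n) := by
      field_simp
    have h5 : M * ((∑ k ∈ Finset.range n, f2 z (X k ϖ)) / n) ≤ ε / 2 := by
      have h6 : M * ((∑ k ∈ Finset.range n, f2 z (X k ϖ)) / n) ≤ M * (ε / (2 * M + 1)) :=
        mul_le_mul_of_nonneg_left hA.le hM
      have h7 : M * (ε / (2 * M + 1)) ≤ ε / 2 := by
        rw [mul_div_assoc', div_le_div_iff₀ (by positivity) (by norm_num)]
        nlinarith
      linarith
    have h8 := hrL z
    linarith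
  have hVz : |empVar Λ X n ϖ (z : ι → Eu d) - V (z : ι → Eu d)| ≤ ε := by
    have e1 : empVar Λ X n ϖ (z : ι → Eu d) = (1/2) * (Sg (z : ι → Eu d) / n) := by
      rw [hempeq]; ring
    have e2 : V (z : ι → Eu d) = (1/2) * ∫ ω, gfun Λ (z : ι → Eu d) ω ∂P := by
      rw [hVdef]; exact extVar_eq_integral hΛmem hPcube z.2.1
    have h1 := (hzall z hzs).1
    rw [e1, e2, ← mul_sub, abs_mul, abs_of_nonneg (by norm_num : (0:ℝ) ≤ (1:ℝ)/2)]
    have h2 := abs_nonneg ((Sg (z : ι → Eu d)) / (n:ℝ) - ∫ ω, gfun Λ (z : ι → Eu d) ω ∂P)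
    linarith
  have hVxs : empVar Λ X n ϖ xs ≤ V xs + ε := by
    have e1 : empVar Λ X n ϖ xs = (1/2) * (Sg xs / n) := by
      rw [hempeq]; ring
    have e2 : V xs = (1/2) * ∫ ω, gfun Λ xs ω ∂P := by
      rw [hVdef]; exact extVar_eq_integral hΛmem hPcube hxsD.1
    have h1 := (abs_lt.1 hxsev).2
    rw [e1, e2]
    linarith
  have hinf : empVar Λ X n ϖ x < empVar Λ X n ϖ xs + 1 / β n := by
    have hbdd : BddBelow (Set.range fun y : D => empVar Λ X n ϖ (y : ι → Eu d)) := by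
      refine ⟨0, ?_⟩
      rintro v ⟨y, rfl⟩
      show (0:ℝ) ≤ empVar Λ X n ϖ (y : ι → Eu d)
      rw [hempeq]
      apply mul_nonneg (by positivity)
      exact Finset.sum_nonneg fun k _ => gfun_nonneg hΛmem _ _
    have h2 := ciInf_le hbdd (⟨xs, hxsD⟩ : D)
    simp only at h2
    linarith
  have hVx_close : |V x - V (z : ι → Eu d)| ≤ ε := by
    have h1 := extVar_diff_le hΛmem hPcube z.2.1 hxD.1 (hr0 z).le hcoord
    rw [← hLdef, ← hMdef, ← hVdef] at h1
    have h2 := hrP z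
    have h3 : (0:ℝ) ≤ (P (Tset (z : ι → Eu d) (2 * r z))).toReal := ENNReal.toReal_nonneg
    have h4 : 2 * M * (P (Tset (z : ι → Eu d) (2 * r z))).toReal ≤ ε := by
      have h5 : (P (Tset (z : ι → Eu d) (2 * r z))).toReal * (2 * M + 1) < ε := by
        rw [← lt_div_iff₀ (by positivity)]
        exact h2
      nlinarith
    have h6 := hrL z
    calc |V x - V (z : ι → Eu d)|
        ≤ (1/2) * (L * r z + 2 * M * (P (Tset (z : ι → Eu d) (2 * r z))).toReal) := h1
      _ ≤ ε := by linarith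
  -- final chain
  have habs1 := abs_le.1 hVn_xz
  have habs2 := abs_le.1 hVz
  have habs3 := abs_le.1 hVx_close
  have hVx_lt : V x < m + 6 * ε := by linarith
  have h6ε : m + 6 * ε < m' := by
    have hε8 : ε * (8 * (M + 1)) = m' - m := by
      rw [hεdef]; field_simp
    nlinarith
  by_contra hxN
  have hxK : x ∈ D ∩ Nᶜ := ⟨hxD, hxN⟩
  have hfin := hx₀min x hxK
  linarith
end
end
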